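/- Let p be a prime and k ≥ 1 an integer with p^k > 2. If P is a finite partially ordered set whose automorphism group Aut(P) is isomorphic to the cyclic group Z/p^k, then P has at least 2·p^k elements. -/

import Mathlib

section Aux

variable {P : Type*} [PartialOrder P]

private lemma orderIso_pow_apply_iterate (f : P ≃o P) (n : ℕ) (a : P) :
    (f ^ n) a = (⇑f)^[n] a := by
  induction n with
  | zero => rfl
  | succ n ih =>
    rw [pow_succ', Function.iterate_succ_apply']
    show f ((f ^ n) a) = _
    rw [ih]

private lemma orderIso_apply_eq_of_le_apply (f : P ≃o P) {N : ℕ} (hN : f ^ N = 1)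
    (hN0 : 0 < N) {x : P} (hx : x ≤ f x) : f x = x := by
  have mono : Monotone fun n => (⇑f)^[n] x := by
    apply monotone_nat_of_le_succ
    intro n
    rw [Function.iterate_succ_apply]
    exact (f.monotone.iterate n) hx
  have h1 : f x ≤ x := by
    have h2 : (⇑f)^[1] x ≤ (⇑f)^[N] x := mono hN0
    have h3 : (⇑f)^[N] x = x := by
      rw [← orderIso_pow_apply_iterate, hN]; rfl
    rw [Function.iterate_one, h3] at h2
    exact h2
  exact le_antisymm h1 hx

private lemma orderIso_pow_dvd_of_fixed {p : ℕ} (hp : p.Prime) {k : ℕ} (f : P ≃o P)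
    (hN : f ^ p ^ k = 1) {y : P} (hy : (f ^ p ^ (k - 1)) y ≠ y)
    {m : ℕ} (hm : (f ^ m) y = y) : p ^ k ∣ m := by
  set d := Function.minimalPeriod (⇑f) y with hd
  have hdN : d ∣ p ^ k := by
    apply Function.IsPeriodicPt.minimalPeriod_dvd
    show (⇑f)^[p ^ k] y = y
    rw [← orderIso_pow_apply_iterate, hN]; rfl
  have hdm : d ∣ m := by
    apply Function.IsPeriodicPt.minimalPeriod_dvd
    show (⇑f)^[m] y = y
    rw [← orderIso_pow_apply_iterate]; exact hm
  obtain ⟨a, ha, hda⟩ := (Nat.dvd_prime_pow hp).mp hdN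
  rcases lt_or_eq_of_le ha with ha' | ha'
  · exfalso
    apply hy
    have hdk : d ∣ p ^ (k - 1) := hda ▸ pow_dvd_pow p (by omega)
    have : (⇑f)^[p ^ (k - 1)] y = y :=
      Function.isPeriodicPt_iff_minimalPeriod_dvd.mpr hdk
    rw [orderIso_pow_apply_iterate]; exact this
  · rw [← ha', ← hda]; exact hdm

end Aux

/-- Let `p` be a prime and `k ≥ 1` with `p ^ k > 2`. If `P` is a finite poset whose
automorphism group is isomorphic to the cyclic group `ℤ/p^k`, then `P` has at least
`2 * p ^ k` elements. -/
theorem le_card_of_aut_iso_zmod_prime_pow (p k : ℕ) (hp : p.Prime) (hk : 1 ≤ k)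
    (hpk : 2 < p ^ k) (P : Type*) [PartialOrder P] [Fintype P]
    (h : Nonempty ((P ≃o P) ≃* Multiplicative (ZMod (p ^ k)))) :
    2 * p ^ k ≤ Fintype.card P := by
  classical
  obtain ⟨e⟩ := h
  set N := p ^ k with hNdef
  set M := p ^ (k - 1) with hMdef
  have hp2 : 2 ≤ p := hp.two_le
  have hM0 : 0 < M := Nat.pow_pos (by omega)
  have hN0 : 0 < N := by omega
  have hMN : M < N := by
    rw [hMdef, hNdef]
    exact Nat.pow_lt_pow_right (by omega) (by omega)
  haveI : NeZero N := ⟨by omega⟩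
  set f : P ≃o P := e.symm (Multiplicative.ofAdd 1) with hfdef
  have hford : orderOf f = N := by
    rw [hfdef, MulEquiv.orderOf_eq, orderOf_ofAdd_eq_addOrderOf, ZMod.addOrderOf_one]
  have hfN : f ^ N = 1 := by
    rw [← hford]; exact pow_orderOf_eq_one f
  -- f^M is not the identity
  have hgne : f ^ M ≠ 1 := by
    intro hgeq
    have h1 := orderOf_dvd_of_pow_eq_one hgeq
    rw [hford] at h1
    have := Nat.le_of_dvd hM0 h1
    omega
  obtain ⟨x, hgx⟩ : ∃ x : P, (f ^ M) x ≠ x := by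
    by_contra hc
    push_neg at hc
    exact hgne (by ext a; exact hc a)
  -- key divisibility: if f^m y = y but f^M y ≠ y then N ∣ m
  have hdvd : ∀ (y : P), (f ^ M) y ≠ y → ∀ m : ℕ, (f ^ m) y = y → N ∣ m := by
    intro y hy m hm
    exact orderIso_pow_dvd_of_fixed hp f hfN hy hm
  -- injectivity of orbit maps
  have hinj : ∀ (y : P), (f ^ M) y ≠ y →
      Function.Injective (fun i : Fin N => (f ^ (i : ℕ)) y) := by
    intro y hy
    have key : ∀ i j : ℕ, i ≤ j → j < N → (f ^ i) y = (f ^ j) y → i = j := by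
      intro i j hle hj hij
      have h1 : (f ^ i) ((f ^ (j - i)) y) = (f ^ i) y := by
        have h2 : (f ^ (i + (j - i))) y = (f ^ j) y := by
          rw [Nat.add_sub_cancel' hle]
        rw [pow_add] at h2
        exact h2.trans hij.symm
      have h3 : (f ^ (j - i)) y = y := (f ^ i).injective h1
      have h4 := hdvd y hy (j - i) h3
      have h5 : j - i = 0 := Nat.eq_zero_of_dvd_of_lt h4 (by omega) |>.symm ▸ rfl
      omega
    intro i j hij
    simp only at hij
    rcases le_total (i : ℕ) (j : ℕ) with hle | hle
    · exact Fin.ext (key i j hle j.isLt hij)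
    · exact Fin.ext (key j i hle i.isLt hij.symm).symm
  -- reduction mod N in exponents
  have hpowmod : ∀ m : ℕ, f ^ m = f ^ (m % N) := by
    intro m
    conv_lhs => rw [← Nat.mod_add_div m N]
    rw [pow_add, pow_mul, hfN, one_pow, mul_one]
  -- the orbit of x is an antichain
  have hanti : ∀ i j : ℕ, i < N → j < N → (f ^ i) x ≤ (f ^ j) x → i = j := by
    intro i j hi hj hle
    set m := N - i + j with hmdef
    have h1 : (f ^ (N - i)) ((f ^ i) x) ≤ (f ^ (N - i)) ((f ^ j) x) :=
      (f ^ (N - i)).monotone hle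
    have e1 : (f ^ (N - i)) ((f ^ i) x) = x := by
      have : (f ^ (N - i + i)) x = x := by
        rw [show N - i + i = N from by omega, hfN]; rfl
      rw [pow_add] at this
      exact this
    have e2 : (f ^ (N - i)) ((f ^ j) x) = (f ^ m) x := by
      rw [hmdef, pow_add]; rfl
    rw [e1, e2] at h1
    have hu : (f ^ m) ^ N = 1 := by
      rw [← pow_mul, mul_comm, pow_mul, hfN, one_pow]
    have h2 : (f ^ m) x = x := orderIso_apply_eq_of_le_apply (f ^ m) hu hN0 h1
    have h3 := hdvd x hgx m h2
    obtain ⟨c, hc⟩ := h3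
    have hm1 : 0 < m := by omega
    have hm2 : m < 2 * N := by omega
    have hc0 : c ≠ 0 := by rintro rfl; omega
    have hclt : c < 2 := by
      by_contra hge
      push_neg at hge
      have : N * 2 ≤ N * c := Nat.mul_le_mul_left N hge
      omega
    interval_cases c
    all_goals omega
  -- the orbit of x as a finset
  set O : Finset P := Finset.image (fun i : Fin N => (f ^ (i : ℕ)) x) Finset.univ with hOdef
  have hcardO : O.card = N := by
    rw [hOdef, Finset.card_image_of_injective _ (hinj x hgx), Finset.card_univ,
      Fintype.card_fin]
  have hmemO : ∀ i : ℕ, i < N → (f ^ i) x ∈ O := by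
    intro i hi
    rw [hOdef, Finset.mem_image]
    exact ⟨⟨i, hi⟩, Finset.mem_univ _, rfl⟩
  -- assume for contradiction the card is small
  by_contra hcard
  push_neg at hcard
  -- every element outside O is fixed by f^M
  have hfix : ∀ z : P, z ∉ O → (f ^ M) z = z := by
    intro y hyO
    by_contra hgy
    set O' : Finset P := Finset.image (fun i : Fin N => (f ^ (i : ℕ)) y) Finset.univ
      with hO'def
    have hcardO' : O'.card = N := by
      rw [hO'def, Finset.card_image_of_injective _ (hinj y hgy), Finset.card_univ,
        Fintype.card_fin]
    have hnotin : ∀ i : Fin N, (f ^ (i : ℕ)) y ∉ O := by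
      intro i hiO
      apply hyO
      rw [hOdef, Finset.mem_image] at hiO
      obtain ⟨j, -, hj⟩ := hiO
      have e1 : (f ^ (N - (i : ℕ))) ((f ^ (i : ℕ)) y) = y := by
        have : (f ^ (N - (i : ℕ) + (i : ℕ))) y = y := by
          rw [show N - (i : ℕ) + (i : ℕ) = N from by omega, hfN]; rfl
        rw [pow_add] at this
        exact this
      have e2 : y = (f ^ (N - (i : ℕ) + (j : ℕ))) x := by
        rw [pow_add]
        show y = (f ^ (N - (i : ℕ))) ((f ^ (j : ℕ)) x)
        rw [hj, e1]
      rw [hpowmod] at e2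
      rw [e2]
      exact hmemO _ (Nat.mod_lt _ hN0)
    have hdisj : Disjoint O O' := by
      rw [Finset.disjoint_right]
      intro a haO'
      rw [hO'def, Finset.mem_image] at haO'
      obtain ⟨i, -, hi⟩ := haO'
      rw [← hi]
      exact hnotin i
    have h1 : (O ∪ O').card ≤ Fintype.card P := by
      rw [← Finset.card_univ]
      exact Finset.card_le_card (Finset.subset_univ _)
    rw [Finset.card_union_of_disjoint hdisj, hcardO, hcardO'] at h1
    omega
  -- basic facts about x and gx := (f^M) x
  have hxO : x ∈ O := by
    have := hmemO 0 hN0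
    rwa [pow_zero] at this
  have hgxO : (f ^ M) x ∈ O := hmemO M hMN
  have haO : ∀ a b : P, a ∈ O → b ∈ O → a ≤ b → a = b := by
    intro a b haO hbO hab
    rw [hOdef, Finset.mem_image] at haO hbO
    obtain ⟨i, -, hi⟩ := haO
    obtain ⟨j, -, hj⟩ := hbO
    rw [← hi, ← hj] at hab ⊢
    rw [hanti (i : ℕ) (j : ℕ) i.isLt j.isLt hab]
  -- helpers for the swap automorphism
  have helper1 : ∀ b : P, x ≤ b → b ≠ x → (f ^ M) x ≤ b := by
    intro b hb hne
    by_cases hbO : b ∈ O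
    · exact absurd (haO x b hxO hbO hb).symm hne
    · have := (f ^ M).monotone hb
      rwa [hfix b hbO] at this
  have helper2 : ∀ b : P, (f ^ M) x ≤ b → b ≠ (f ^ M) x → x ≤ b := by
    intro b hb hne
    by_cases hbO : b ∈ O
    · exact absurd (haO _ b hgxO hbO hb).symm hne
    · exact (f ^ M).le_iff_le.mp (by rw [hfix b hbO]; exact hb)
  have helper3 : ∀ a : P, a ≤ x → a ≠ x → a ≤ (f ^ M) x := by
    intro a ha hne
    by_cases haO' : a ∈ O
    · exact absurd (haO a x haO' hxO ha) hne
    · have := (f ^ M).monotone ha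
      rwa [hfix a haO'] at this
  have helper4 : ∀ a : P, a ≤ (f ^ M) x → a ≠ (f ^ M) x → a ≤ x := by
    intro a ha hne
    by_cases haO' : a ∈ O
    · exact absurd (haO a _ haO' hgxO ha) hne
    · exact (f ^ M).le_iff_le.mp (by rw [hfix a haO']; exact ha)
  have hxgx_not_le : ¬ x ≤ (f ^ M) x := fun hle => hgx (haO x _ hxO hgxO hle).symm
  have hgxx_not_le : ¬ (f ^ M) x ≤ x := fun hle => hgx (haO _ x hgxO hxO hle)
  -- monotonicity of the swap
  have mono : ∀ a b : P, a ≤ b →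
      Equiv.swap x ((f ^ M) x) a ≤ Equiv.swap x ((f ^ M) x) b := by
    intro a b hab
    rcases eq_or_ne a b with rfl | hne
    · exact le_refl _
    by_cases hax : a = x
    · subst hax
      rw [Equiv.swap_apply_left]
      by_cases hbg : b = (f ^ M) a
      · exact absurd (hbg ▸ hab) hxgx_not_le
      · rw [Equiv.swap_apply_of_ne_of_ne (Ne.symm hne) hbg]
        exact helper1 b hab (Ne.symm hne)
    by_cases hag : a = (f ^ M) x
    · rw [hag, Equiv.swap_apply_right]
      by_cases hbx : b = x
      · exact absurd ((hag ▸ hbx ▸ hab)) hgxx_not_le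
      · have hbg : b ≠ (f ^ M) x := fun hbg => hne (hag.trans hbg.symm)
        rw [Equiv.swap_apply_of_ne_of_ne hbx hbg]
        exact helper2 b (hag ▸ hab) hbg
    · rw [Equiv.swap_apply_of_ne_of_ne hax hag]
      by_cases hbx : b = x
      · subst hbx
        rw [Equiv.swap_apply_left]
        exact helper3 a hab hax
      by_cases hbg : b = (f ^ M) x
      · subst hbg
        rw [Equiv.swap_apply_right]
        exact helper4 a hab hag
      · rw [Equiv.swap_apply_of_ne_of_ne hbx hbg]
        exact hab
  -- the swap as an order automorphism
  set H : P ≃o P :=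
    { toEquiv := Equiv.swap x ((f ^ M) x)
      map_rel_iff' := by
        intro a b
        constructor
        · intro hle
          have := mono _ _ hle
          rwa [Equiv.swap_apply_self, Equiv.swap_apply_self] at this
        · exact mono a b } with hHdef
  have hHapp : ∀ a : P, H a = Equiv.swap x ((f ^ M) x) a := fun a => rfl
  -- commutativity from the abelian group
  have hcomm : H * f = f * H := e.injective (by rw [map_mul, map_mul, mul_comm])
  have hHf : H (f x) = f (H x) := by
    have := congrArg (fun (u : P ≃o P) => u x) hcomm
    exact this
  have hfx_ne : f x ≠ x := by
    intro hfx
    have h1 : N ∣ 1 := hdvd x hgx 1 (by rwa [pow_one])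
    have := Nat.le_of_dvd one_pos h1
    omega
  have hHx : H x = (f ^ M) x := by
    rw [hHapp, Equiv.swap_apply_left]
  by_cases hfg : f x = (f ^ M) x
  · have h1 : H (f x) = x := by
      rw [hHapp, hfg, Equiv.swap_apply_right]
    have h2 : f (H x) = f (f x) := by rw [hHx, ← hfg]
    have h3 : (f ^ 2) x = x := by
      rw [pow_two]
      show f (f x) = x
      rw [← h2, ← hHf, h1]
    have h4 : N ∣ 2 := hdvd x hgx 2 h3
    have := Nat.le_of_dvd (by omega) h4
    omega
  · have h1 : H (f x) = f x := by
      rw [hHapp, Equiv.swap_apply_of_ne_of_ne hfx_ne hfg]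
    have h2 : f (H x) = f ((f ^ M) x) := by rw [hHx]
    have h3 : f x = f ((f ^ M) x) := by rw [← h1, hHf, h2]
    exact hgx (f.injective h3).symm
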